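/- Let F : ℝᵐ → ℝⁿ be any (possibly discontinuous) function. Define its set-valued closure F̄(x) = {y : (x, y) ∈ closure(𝒢_F)}, where 𝒢_F is the graph of F. Then the graph of F̄ equals the closure of 𝒢_F, is closed, and F(x) ∈ F̄(x) for every x; consequently there exists a 1-Lipschitz g : ℝ^{m+n} → ℝ with argmin_y g(x, y) = F̄(x) for all x. -/

import Mathlib

open Metric

noncomputable abbrev E (n : ℕ) : Type := EuclideanSpace ℝ (Fin n)
noncomputable abbrev P (m n : ℕ) : Type := WithLp 2 (E m × E n)

/-- The set-valued closure of an arbitrary function's graph is closed, contains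
the function, and is represented by a 1-Lipschitz implicit function. -/
theorem closure_graph_implicit (m n : ℕ) (F : E m → E n)
    (Fbar : E m → Set (E n))
    (hFbar : ∀ x, Fbar x = {y : E n | (WithLp.toLp 2 (x, y) : P m n) ∈ closure {p : P m n | p.ofLp.2 = F p.ofLp.1}}) :
    {p : P m n | p.ofLp.2 ∈ Fbar p.ofLp.1} = closure {p : P m n | p.ofLp.2 = F p.ofLp.1} ∧
      IsClosed {p : P m n | p.ofLp.2 ∈ Fbar p.ofLp.1} ∧
      (∀ x, F x ∈ Fbar x) ∧
      ∃ g : P m n → ℝ, LipschitzWith 1 g ∧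
        ∀ x : E m, {y : E n | ∀ y' : E n, g (WithLp.toLp 2 (x, y) : P m n) ≤ g (WithLp.toLp 2 (x, y') : P m n)} = Fbar x := by
  set S : Set (P m n) := {p : P m n | p.ofLp.2 = F p.ofLp.1} with hS
  have hgraph : {p : P m n | p.ofLp.2 ∈ Fbar p.ofLp.1} = closure S := by
    ext p
    simp only [Set.mem_setOf_eq, hFbar]
  have hmemS : ∀ x : E m, (WithLp.toLp 2 (x, F x) : P m n) ∈ S := fun x => rfl
  have hmem : ∀ x, F x ∈ Fbar x := by
    intro x
    rw [hFbar]
    exact subset_closure (hmemS x)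
  set g : P m n → ℝ := fun p => infDist p (closure S) with hg
  refine ⟨hgraph, hgraph ▸ isClosed_closure, hmem, g, lipschitz_infDist_pt _, fun x => ?_⟩
  ext y
  simp only [Set.mem_setOf_eq, hFbar]
  have hne : (closure S).Nonempty := ⟨_, subset_closure (hmemS x)⟩
  have hzero : ∀ p : P m n, p ∈ closure S → g p = 0 := fun p hp => infDist_zero_of_mem hp
  constructor
  · intro h
    have h0 : g (WithLp.toLp 2 (x, F x) : P m n) = 0 := hzero _ (subset_closure (hmemS x))
    have h1 : g (WithLp.toLp 2 (x, y) : P m n) ≤ 0 := h0 ▸ h (F x)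
    have h2 : g (WithLp.toLp 2 (x, y) : P m n) = 0 := le_antisymm h1 infDist_nonneg
    exact (isClosed_closure.mem_iff_infDist_zero hne).2 h2
  · intro h y'
    rw [hzero _ h]
    exact infDist_nonneg
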